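/- Let w ∈ S_n be a prism with a letter i ∈ supp(w) unconfined in every reduced word of w, and suppose i−1 ∉ supp(w). Then either (w(i) = i+1 and the value i occurs among w(i+1),…,w(n)), or (w(i+1) = i and w(i) ≥ i+1). (These two alternatives are the one-line-notation renderings of the two calibrated mesh patterns of the proposition.) -/

import Mathlib

/-- The adjacent transposition `σ_i`, swapping `i` and `i+1` (acting on `ℕ`). -/
def sigmaT (i : ℕ) : Equiv.Perm ℕ := Equiv.swap i (i + 1)

/-- The permutation given by a word (product of simple reflections, composed as functions). -/
def wordProd (s : List ℕ) : Equiv.Perm ℕ := (s.map sigmaT).prod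

/-- `s` is a word for `w` in `S_n`: all letters lie in `{1,…,n-1}` and the product is `w`. -/
def IsWord (n : ℕ) (w : Equiv.Perm ℕ) (s : List ℕ) : Prop :=
  (∀ j ∈ s, 1 ≤ j ∧ j ≤ n - 1) ∧ wordProd s = w

/-- `s` is a reduced word for `w`: a word of minimal length. -/
def IsReducedWord (n : ℕ) (w : Equiv.Perm ℕ) (s : List ℕ) : Prop :=
  IsWord n w s ∧ ∀ t : List ℕ, IsWord n w t → s.length ≤ t.length

/-- The Coxeter length `ℓ(w)`. -/
noncomputable def ell (n : ℕ) (w : Equiv.Perm ℕ) : ℕ :=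
  sInf {k | ∃ s : List ℕ, IsWord n w s ∧ s.length = k}

/-- The support of `w`: letters appearing in reduced words of `w`. -/
def supp (n : ℕ) (w : Equiv.Perm ℕ) : Set ℕ :=
  {i | ∃ s : List ℕ, IsReducedWord n w s ∧ i ∈ s}

/-- Bruhat order: some reduced word of `v` is a subsequence of some reduced word of `w`. -/
def BruhatLE (n : ℕ) (v w : Equiv.Perm ℕ) : Prop :=
  ∃ s t : List ℕ, IsReducedWord n v s ∧ IsReducedWord n w t ∧ s.Sublist t

/-- The principal order ideal `B(w)`, as a type. -/
def IdealB (n : ℕ) (w : Equiv.Perm ℕ) : Type := {v : Equiv.Perm ℕ // BruhatLE n v w}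

/-- The Bruhat order restricted to `B(w)`. -/
def IdealLE (n : ℕ) (w : Equiv.Perm ℕ) (a b : IdealB n w) : Prop := BruhatLE n a.1 b.1

/-- Two relations are isomorphic (order isomorphism of the corresponding ordered sets). -/
def RelIsomorphic {α β : Type*} (ra : α → α → Prop) (rb : β → β → Prop) : Prop :=
  ∃ e : α ≃ β, ∀ a b : α, ra a b ↔ rb (e a) (e b)

/-- `w` is a prism: `B(w) ≅ C₂ × X` for some partially ordered set `X`
(the two-element chain `C₂` realized as `Bool`), with the componentwise order. -/
def IsPrism (n : ℕ) (w : Equiv.Perm ℕ) : Prop :=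
  ∃ (X : Type) (rX : X → X → Prop), IsPartialOrder X rX ∧
    RelIsomorphic (IdealLE n w)
      (fun p q : Bool × X => (p.1 ≤ q.1) ∧ rX p.2 q.2)

/-- `w` belongs to `S_n`: it fixes every point outside `{1,…,n}`. -/
def MemSymm (n : ℕ) (w : Equiv.Perm ℕ) : Prop :=
  ∀ x : ℕ, x ∉ Set.Icc 1 n → w x = x

/-- `i` is unconfined in the word `s`: it appears exactly once, not between two copies
of `i+1` and not between two copies of `i-1`. -/
def Unconfined (i : ℕ) (s : List ℕ) : Prop :=
  s.count i = 1 ∧ ∀ a b : List ℕ, s = a ++ i :: b →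
    ¬((i + 1) ∈ a ∧ (i + 1) ∈ b) ∧ ¬((i - 1) ∈ a ∧ (i - 1) ∈ b)

/-- `B(w) ≅ C₂ × B(v)` with the componentwise order. -/
def IsoC2TimesIdeal (n : ℕ) (w v : Equiv.Perm ℕ) : Prop :=
  RelIsomorphic (IdealLE n w)
    (fun p q : Bool × IdealB n v => (p.1 ≤ q.1) ∧ IdealLE n v p.2 q.2)

lemma wordProd_cons' (j : ℕ) (t : List ℕ) : wordProd (j :: t) = sigmaT j * wordProd t := by
  simp [wordProd]

lemma wordProd_append_cons (a b : List ℕ) (i : ℕ) :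
    wordProd (a ++ i :: b) = wordProd a * (sigmaT i * wordProd b) := by
  simp [wordProd, mul_assoc]

lemma wordProd_fix {i : ℕ} {l : List ℕ} (h : ∀ j ∈ l, j ≠ i ∧ j + 1 ≠ i) :
    wordProd l i = i := by
  induction l with
  | nil => rfl
  | cons j t ih =>
    have h1 := h j List.mem_cons_self
    have ht : wordProd t i = i := ih (fun k hk => h k (List.mem_cons_of_mem _ hk))
    rw [wordProd_cons', Equiv.Perm.mul_apply, ht, sigmaT,
      Equiv.swap_apply_of_ne_of_ne (by omega) (by omega)]

lemma wordProd_le {i : ℕ} {l : List ℕ} (h : ∀ j ∈ l, j ≠ i ∧ j + 1 ≠ i) :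
    ∀ x, x ≤ i → wordProd l x ≤ i := by
  induction l with
  | nil => intro x hx; simpa [wordProd] using hx
  | cons j t ih =>
    intro x hx
    obtain ⟨h1a, h1b⟩ := h j List.mem_cons_self
    have hx' : wordProd t x ≤ i := ih (fun k hk => h k (List.mem_cons_of_mem _ hk)) x hx
    rw [wordProd_cons', Equiv.Perm.mul_apply, sigmaT, Equiv.swap_apply_def]
    split_ifs <;> omega

lemma wordProd_ge {i : ℕ} {l : List ℕ} (h : ∀ j ∈ l, j ≠ i ∧ j + 1 ≠ i) :
    ∀ x, i + 1 ≤ x → i + 1 ≤ wordProd l x := by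
  induction l with
  | nil => intro x hx; simpa [wordProd] using hx
  | cons j t ih =>
    intro x hx
    obtain ⟨h1a, h1b⟩ := h j List.mem_cons_self
    have hx' : i + 1 ≤ wordProd t x := ih (fun k hk => h k (List.mem_cons_of_mem _ hk)) x hx
    rw [wordProd_cons', Equiv.Perm.mul_apply, sigmaT, Equiv.swap_apply_def]
    split_ifs <;> omega

/-- a prism with unconfined i and i-1 ∉ supp(w) contains one of the two
calibrated patterns (one-line-notation rendering). -/
theorem prism_incomplete_support_below (n : ℕ) (w : Equiv.Perm ℕ) (hw : MemSymm n w) (i : ℕ)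
    (hprism : IsPrism n w) (hi : i ∈ supp n w)
    (hu : ∀ s : List ℕ, IsReducedWord n w s → Unconfined i s)
    (hmiss : i - 1 ∉ supp n w) :
    (w i = i + 1 ∧ ∃ x : ℕ, i + 1 ≤ x ∧ x ≤ n ∧ w x = i) ∨
    (w (i + 1) = i ∧ i + 1 ≤ w i) := by
  obtain ⟨s, hred, hmem⟩ := hi
  obtain ⟨hc, hcond⟩ := hu s hred
  obtain ⟨a, b, rfl⟩ := List.append_of_mem hmem
  have hletters := hred.1.1
  obtain ⟨hi1, hi2⟩ := hletters i hmem
  -- i appears neither in a nor in b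
  have hca : i ∉ a ∧ i ∉ b := by
    rw [List.count_append, List.count_cons_self] at hc
    constructor <;> rw [← List.count_eq_zero] <;> omega
  -- i - 1 appears nowhere in the word
  have hsup : ∀ j ∈ a ++ i :: b, j ≠ i - 1 := by
    intro j hj hji
    exact hmiss ⟨a ++ i :: b, hred, hji ▸ hj⟩
  have hA : ∀ j ∈ a, j ≠ i ∧ j + 1 ≠ i := by
    intro j hj
    have h1 : j ≠ i - 1 := hsup j (by simp [hj])
    have h2 : j ≠ i := fun h => hca.1 (h ▸ hj)
    omega
  have hB : ∀ j ∈ b, j ≠ i ∧ j + 1 ≠ i := by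
    intro j hj
    have h1 : j ≠ i - 1 := hsup j (by simp [hj])
    have h2 : j ≠ i := fun h => hca.2 (h ▸ hj)
    omega
  have hweq : wordProd a * (sigmaT i * wordProd b) = w := by
    rw [← wordProd_append_cons]; exact hred.1.2
  have hne1 : ¬((i + 1) ∈ a ∧ (i + 1) ∈ b) := (hcond a b rfl).1
  by_cases ha1 : (i + 1) ∈ a
  · -- i+1 appears in a, hence not in b: second alternative
    right
    have hb1 : (i + 1) ∉ b := fun h => hne1 ⟨ha1, h⟩
    have hBfix1 : ∀ j ∈ b, j ≠ i + 1 ∧ j + 1 ≠ i + 1 := by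
      intro j hj
      have := hB j hj
      have : j ≠ i + 1 := fun h => hb1 (h ▸ hj)
      exact ⟨this, fun h => (hB j hj).1 (by omega)⟩
    have hBi1 : wordProd b (i + 1) = i + 1 := wordProd_fix hBfix1
    have hBi : wordProd b i = i := wordProd_fix hB
    constructor
    · rw [← hweq, Equiv.Perm.mul_apply, Equiv.Perm.mul_apply, hBi1]
      rw [show sigmaT i (i + 1) = i from Equiv.swap_apply_right _ _]
      exact wordProd_fix hA
    · rw [← hweq, Equiv.Perm.mul_apply, Equiv.Perm.mul_apply, hBi]
      rw [show sigmaT i i = i + 1 from Equiv.swap_apply_left _ _]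
      exact wordProd_ge hA (i + 1) le_rfl
  · -- i+1 does not appear in a: first alternative
    left
    have hAfix1 : ∀ j ∈ a, j ≠ i + 1 ∧ j + 1 ≠ i + 1 := by
      intro j hj
      have h2 : j ≠ i + 1 := fun h => ha1 (h ▸ hj)
      exact ⟨h2, fun h => (hA j hj).1 (by omega)⟩
    have hBi : wordProd b i = i := wordProd_fix hB
    have hwi : w i = i + 1 := by
      rw [← hweq, Equiv.Perm.mul_apply, Equiv.Perm.mul_apply, hBi]
      rw [show sigmaT i i = i + 1 from Equiv.swap_apply_left _ _]
      exact wordProd_fix hAfix1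
    refine ⟨hwi, (wordProd b)⁻¹ (i + 1), ?_⟩
    set x := (wordProd b)⁻¹ (i + 1) with hxdef
    have hbx : wordProd b x = i + 1 := (wordProd b).apply_symm_apply (i + 1)
    have hx1 : i + 1 ≤ x := by
      by_contra hlt
      have : wordProd b x ≤ i := wordProd_le hB x (by omega)
      omega
    have hwx : w x = i := by
      rw [← hweq, Equiv.Perm.mul_apply, Equiv.Perm.mul_apply, hbx]
      rw [show sigmaT i (i + 1) = i from Equiv.swap_apply_right _ _]
      exact wordProd_fix hA
    have hxn : x ≤ n := by
      by_contra hxn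
      have : w x = x := hw x (by simp [Set.mem_Icc]; omega)
      omega
    exact ⟨hx1, hxn, hwx⟩
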